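/- Let K be a commutative semiring, let n ≥ 1, τ ≥ 0, set ν = n + τ, and let m' ≥ 1 with μ = 2m'. Let U be the 2ν×2ν block-diagonal matrix [[P_2^{2n}, 0], [0, I_{2τ}]]. Then (U ⊗ I_{m'}) · (I_ν ⊗ P_2^{μ}) equals the block-diagonal matrix of order μν given by [[P_2^{nμ}, 0], [0, I_τ ⊗ P_2^{μ}]], where the top-left block has order nμ and the bottom-right block has order τμ. -/
import Mathlib


open Matrix

/-- The `mn`-point stride-`n` permutation, as a permutation of `Fin N` (where `N = m * n`):
it sends the index of `e_i^m ⊗ e_j^n` (i.e. `n*i + j`, zero-based) to the index of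
`e_j^n ⊗ e_i^m` (i.e. `m*j + i`). -/
def strideEquiv (N m n : ℕ) (h : N = m * n) : Fin N ≃ Fin N :=
  (finCongr h).trans <|
    finProdFinEquiv.symm.trans <|
      (Equiv.prodComm (Fin m) (Fin n)).trans <|
        finProdFinEquiv.trans (finCongr (by rw [h]; exact Nat.mul_comm n m))

/-- The `mn`-point stride-`n` permutation matrix `P_n^{mn}`: the `N × N` permutation matrix
(`N = m * n`) determined by `P_n^{mn} · (e_i^m ⊗ e_j^n) = e_j^n ⊗ e_i^m`. -/
def strideMat (K : Type*) [Semiring K] (N m n : ℕ) (h : N = m * n) :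
    Matrix (Fin N) (Fin N) K :=
  Matrix.of fun a b => if a = strideEquiv N m n h b then 1 else 0

/-- Kronecker (tensor) product of matrices, with row-major indexing by `Fin`:
the `(n*i + s, q*j + t)` entry of `kron A B` is `A i j * B s t`. -/
def kron {K : Type*} [Mul K] {m n p q : ℕ}
    (A : Matrix (Fin m) (Fin n) K) (B : Matrix (Fin p) (Fin q) K) :
    Matrix (Fin (m * p)) (Fin (n * q)) K :=
  Matrix.reindex finProdFinEquiv finProdFinEquiv (Matrix.kroneckerMap (· * ·) A B)

/-- Cast a matrix along equalities of its dimensions. -/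
def mcast {K : Type*} {a b c d : ℕ} (h₁ : a = b) (h₂ : c = d)
    (A : Matrix (Fin a) (Fin c) K) : Matrix (Fin b) (Fin d) K :=
  Matrix.reindex (finCongr h₁) (finCongr h₂) A

/-- The `N × N` block-diagonal matrix `[[X, 0], [0, H]]` with top-left block `X` of
order `a` and bottom-right block `H` of order `N - a`. -/
def blockDiag2 (K : Type*) [Semiring K] (N : ℕ) {a : ℕ} (X : Matrix (Fin a) (Fin a) K)
    (H : Matrix (Fin (N - a)) (Fin (N - a)) K) : Matrix (Fin N) (Fin N) K :=
  Matrix.of fun i j =>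
    if hi : (i : ℕ) < a then
      (if hj : (j : ℕ) < a then X ⟨i, hi⟩ ⟨j, hj⟩ else 0)
    else if (j : ℕ) < a then 0
    else H ⟨(i : ℕ) - a, by have := i.isLt; omega⟩ ⟨(j : ℕ) - a, by have := j.isLt; omega⟩

-- helper lemmas
theorem nat_divmod {d x r u : ℕ} (hr : r < d) (hx : x = r + d * u) :
    x / d = u ∧ x % d = r := by
  subst hx
  have hd : 0 < d := Nat.lt_of_le_of_lt (Nat.zero_le _) hr
  exact ⟨by rw [Nat.add_mul_div_left _ _ hd, Nat.div_eq_of_lt hr, Nat.zero_add],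
    by rw [Nat.add_mul_mod_self_left, Nat.mod_eq_of_lt hr]⟩

theorem nat_cancel {d s q a b : ℕ} (hs : s < d) (hq : q < d) :
    s + d * a = q + d * b ↔ s = q ∧ a = b := by
  constructor
  · intro h
    obtain ⟨h1, h2⟩ := nat_divmod hq h
    obtain ⟨h3, h4⟩ := nat_divmod hs (rfl : s + d * a = s + d * a)
    omega
  · rintro ⟨rfl, rfl⟩; rfl

theorem nat_bound {d r u c : ℕ} (hr : r < d) (hu : u < c) : r + d * u < d * c :=
  calc r + d * u < d + d * u := by omega
    _ = d * (u + 1) := by ring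
    _ ≤ d * c := Nat.mul_le_mul_left d hu

theorem nat_bound_rev {d r u c : ℕ} (h : r + d * u < d * c) : u < c := by
  by_contra hc
  push_neg at hc
  have := Nat.mul_le_mul_left d hc
  omega

theorem strideEquiv_val (N m n : ℕ) (h : N = m * n) (b : Fin N) (i j : ℕ)
    (hi : i < m) (hj : j < n) (hb : (b : ℕ) = j + n * i) :
    ((strideEquiv N m n h b : Fin N) : ℕ) = i + m * j := by
  have hd := nat_divmod hj hb
  simp only [strideEquiv, Equiv.trans_apply, finCongr_apply, Fin.coe_cast,
    finProdFinEquiv_apply_val, Equiv.prodComm_apply, Prod.snd_swap, Prod.fst_swap]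
  have h1 : ((Fin.cast h b).divNat : ℕ) = i := by
    rw [Fin.coe_divNat]; simp only [Fin.coe_cast]; exact hd.1
  have h2 : ((Fin.cast h b).modNat : ℕ) = j := by
    rw [Fin.coe_modNat]; simp only [Fin.coe_cast]; exact hd.2
  simp only [finProdFinEquiv, Equiv.coe_fn_symm_mk, Equiv.coe_fn_mk]
  rw [h1, h2, Nat.add_comm]

theorem strideMat_apply_val {K : Type*} [Semiring K] (N m n : ℕ) (h : N = m * n)
    (a b : Fin N) (i j : ℕ) (hi : i < m) (hj : j < n) (hb : (b : ℕ) = j + n * i) :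
    strideMat K N m n h a b = if (a : ℕ) = i + m * j then 1 else 0 := by
  rw [strideMat, Matrix.of_apply]
  congr 1
  rw [Fin.ext_iff, strideEquiv_val N m n h b i j hi hj hb]

theorem kron_apply {K : Type*} [Mul K] {m n p q : ℕ}
    (A : Matrix (Fin m) (Fin n) K) (B : Matrix (Fin p) (Fin q) K)
    (x : Fin (m * p)) (y : Fin (n * q)) :
    kron A B x y = A x.divNat y.divNat * B x.modNat y.modNat := rfl

theorem mcast_apply {K : Type*} {a b c d : ℕ} (h₁ : a = b) (h₂ : c = d)
    (A : Matrix (Fin a) (Fin c) K) (x : Fin b) (y : Fin d) :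
    mcast h₁ h₂ A x y = A (Fin.cast h₁.symm x) (Fin.cast h₂.symm y) := rfl

theorem one_apply_val {K : Type*} [Semiring K] {p : ℕ} (a b : Fin p) :
    (1 : Matrix (Fin p) (Fin p) K) a b = if (a : ℕ) = (b : ℕ) then 1 else 0 := by
  rw [Matrix.one_apply]
  congr 1
  rw [Fin.ext_iff]

theorem mul_permCol {K : Type*} [CommSemiring K] {N : ℕ}
    (A B : Matrix (Fin N) (Fin N) K) (i j k₀ : Fin N)
    (hB : ∀ k, B k j = if k = k₀ then 1 else 0) :
    (A * B) i j = A i k₀ := by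
  rw [Matrix.mul_apply]
  rw [Finset.sum_congr rfl (fun k _ => by rw [hB k])]
  simp [mul_ite]

theorem ite_one_mul_ite_one {K : Type*} [Semiring K] (P Q : Prop) [Decidable P] [Decidable Q] :
    ((if P then (1:K) else 0) * (if Q then (1:K) else 0)) = if P ∧ Q then 1 else 0 := by
  by_cases hP : P <;> by_cases hQ : Q <;> simp [hP, hQ]


set_option maxHeartbeats 1000000 in
/-- Let `n ≥ 1`, `τ ≥ 0`, `ν = n + τ`, `m' ≥ 1`, `μ = 2m'`, and let `U` be
the `2ν × 2ν` block-diagonal matrix `[[P_2^{2n}, 0], [0, I_{2τ}]]`. Then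
`(U ⊗ I_{m'}) · (I_ν ⊗ P_2^μ) = [[P_2^{nμ}, 0], [0, I_τ ⊗ P_2^μ]]` (a block-diagonal matrix
of order `μν`, with top-left block of order `nμ` and bottom-right block of order `τμ`). -/
theorem blockdiag_stride_factorization (K : Type*) [CommSemiring K] (n τ m' : ℕ)
    (hn : 1 ≤ n) (hm' : 1 ≤ m') :
    kron
        (blockDiag2 K (2 * (n + τ)) (strideMat K (2 * n) n 2 (Nat.mul_comm 2 n))
          (1 : Matrix (Fin (2 * (n + τ) - 2 * n)) (Fin (2 * (n + τ) - 2 * n)) K))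
        (1 : Matrix (Fin m') (Fin m') K) *
      mcast (show (n + τ) * (2 * m') = 2 * (n + τ) * m' by ring)
          (show (n + τ) * (2 * m') = 2 * (n + τ) * m' by ring)
          (kron (1 : Matrix (Fin (n + τ)) (Fin (n + τ)) K)
            (strideMat K (2 * m') m' 2 (Nat.mul_comm 2 m'))) =
    blockDiag2 K (2 * (n + τ) * m')
      (strideMat K (n * (2 * m')) (n * m') 2 (by ring))
      (mcast
        (show τ * (2 * m') = 2 * (n + τ) * m' - n * (2 * m') from by
          have h : 2 * (n + τ) * m' = n * (2 * m') + τ * (2 * m') := by ring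
          omega)
        (show τ * (2 * m') = 2 * (n + τ) * m' - n * (2 * m') from by
          have h : 2 * (n + τ) * m' = n * (2 * m') + τ * (2 * m') := by ring
          omega)
        (kron (1 : Matrix (Fin τ) (Fin τ) K)
          (strideMat K (2 * m') m' 2 (Nat.mul_comm 2 m')))) := by
  have hm0 : 0 < m' := hm'
  ext i j
  -- decompose the row index
  obtain ⟨u, s, hs, hu, hiv⟩ : ∃ u s, s < m' ∧ u < 2 * (n + τ) ∧ (i : ℕ) = s + m' * u := by
    refine ⟨(i : ℕ) / m', (i : ℕ) % m', Nat.mod_lt _ hm0,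
      nat_bound_rev (d := m') (r := (i : ℕ) % m') ?_, (Nat.mod_add_div _ _).symm⟩
    rw [Nat.mod_add_div]
    have h1 : m' * (2 * (n + τ)) = 2 * (n + τ) * m' := by ring
    have h2 := i.isLt
    omega
  -- decompose the column index
  obtain ⟨v, t, ht, hv, hjv⟩ : ∃ v t, t < 2 * m' ∧ v < n + τ ∧ (j : ℕ) = t + 2 * m' * v := by
    refine ⟨(j : ℕ) / (2 * m'), (j : ℕ) % (2 * m'), Nat.mod_lt _ (by omega),
      nat_bound_rev (d := 2 * m') (r := (j : ℕ) % (2 * m')) ?_, (Nat.mod_add_div _ _).symm⟩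
    rw [Nat.mod_add_div]
    have h1 : 2 * m' * (n + τ) = 2 * (n + τ) * m' := by ring
    have h2 := j.isLt
    omega
  obtain ⟨d, q, hd, hq, htdq⟩ : ∃ d q, d < 2 ∧ q < m' ∧ t = d + 2 * q :=
    ⟨t % 2, t / 2, by omega, by omega, by omega⟩
  have hqd : q + m' * d < 2 * m' := by
    have h1 : m' * d ≤ m' * 1 := Nat.mul_le_mul_left _ (by omega)
    omega
  have hk0lt : (q + m' * d) + 2 * m' * v < 2 * (n + τ) * m' := by
    have h2 := nat_bound (d := 2 * m') (r := q + m' * d) (u := v) (c := n + τ) hqd hv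
    have h3 : 2 * m' * (n + τ) = 2 * (n + τ) * m' := by ring
    omega
  set k₀ : Fin (2 * (n + τ) * m') := ⟨(q + m' * d) + 2 * m' * v, hk0lt⟩ with hk₀
  have hjdm := nat_divmod ht hjv   -- ↑j / (2*m') = v ∧ ↑j % (2*m') = t
  have hidm := nat_divmod hs hiv   -- ↑i / m' = u ∧ ↑i % m' = s
  refine Eq.trans (mul_permCol _ _ i j k₀ ?_) ?_
  · -- the column of the second factor
    intro k
    rw [mcast_apply, kron_apply, one_apply_val]
    rw [strideMat_apply_val (2 * m') m' 2 (Nat.mul_comm 2 m') _ _ q d hq hd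
      (by rw [Fin.coe_modNat, Fin.coe_cast, hjdm.2]; exact htdq)]
    rw [ite_one_mul_ite_one]
    refine if_congr ?_ rfl rfl
    simp only [Fin.coe_divNat, Fin.coe_modNat, Fin.coe_cast, Fin.ext_iff, hk₀]
    constructor
    · rintro ⟨h1, h2⟩
      have h3 := Nat.mod_add_div (k : ℕ) (2 * m')
      rw [h1, h2, hjdm.1] at h3
      exact h3.symm
    · intro hk
      have h4 := nat_divmod hqd hk
      rw [h4.1, h4.2, hjdm.1]
      exact ⟨rfl, rfl⟩
  · -- evaluate `A i k₀` and compare with the right-hand side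
    have hk0v : (k₀ : ℕ) = q + m' * (d + 2 * v) := by
      show (q + m' * d) + 2 * m' * v = _; ring
    have hk0dm := nat_divmod hq hk0v
    rw [kron_apply, one_apply_val]
    have hdi : (i.divNat : ℕ) = u := by rw [Fin.coe_divNat]; exact hidm.1
    have hmi : (i.modNat : ℕ) = s := by rw [Fin.coe_modNat]; exact hidm.2
    have hdk : (k₀.divNat : ℕ) = d + 2 * v := by rw [Fin.coe_divNat]; exact hk0dm.1
    have hmk : (k₀.modNat : ℕ) = q := by rw [Fin.coe_modNat]; exact hk0dm.2
    rw [hmi, hmk]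
    simp only [blockDiag2, Matrix.of_apply]
    have hbi : ((i : ℕ) < n * (2 * m')) ↔ u < 2 * n := by
      rw [hiv, show n * (2 * m') = m' * (2 * n) from by ring]
      exact ⟨nat_bound_rev, nat_bound hs⟩
    have hbj : ((j : ℕ) < n * (2 * m')) ↔ v < n := by
      rw [hjv, show n * (2 * m') = 2 * m' * n from by ring]
      exact ⟨nat_bound_rev, nat_bound ht⟩
    by_cases hun : u < 2 * n <;> by_cases hvn : v < n
    · -- top-left blocks
      rw [dif_pos (show (i.divNat : ℕ) < 2 * n from by rw [hdi]; exact hun),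
        dif_pos (show (k₀.divNat : ℕ) < 2 * n from by rw [hdk]; omega),
        dif_pos (hbi.mpr hun), dif_pos (hbj.mpr hvn)]
      rw [strideMat_apply_val (2 * n) n 2 (Nat.mul_comm 2 n) _ _ v d hvn hd
        (by simpa using hdk)]
      have hlt : q + m' * v < n * m' := by
        have h1 := nat_bound hq hvn
        have h2 : m' * n = n * m' := by ring
        omega
      rw [strideMat_apply_val (n * (2 * m')) (n * m') 2 (by ring) _ _ (q + m' * v) d hlt hd
        (by
          show (j : ℕ) = d + 2 * (q + m' * v)
          have h1 : 2 * m' * v = 2 * (m' * v) := by ring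
          have h2 : 2 * (q + m' * v) = 2 * q + 2 * (m' * v) := by ring
          omega)]
      rw [ite_one_mul_ite_one]
      refine if_congr ?_ rfl rfl
      show (i.divNat : ℕ) = v + n * d ∧ s = q ↔ (i : ℕ) = q + m' * v + n * m' * d
      rw [hdi, hiv, show q + m' * v + n * m' * d = q + m' * (v + n * d) from by ring,
        nat_cancel hs hq]
      exact and_comm
    · -- top-left vs bottom-right: zero
      rw [dif_pos (show (i.divNat : ℕ) < 2 * n from by rw [hdi]; exact hun),
        dif_neg (show ¬ (k₀.divNat : ℕ) < 2 * n from by rw [hdk]; omega),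
        dif_pos (hbi.mpr hun), dif_neg (show ¬ (j : ℕ) < n * (2 * m') from by
          rw [hbj]; exact hvn)]
      simp
    · rw [dif_neg (show ¬ (i.divNat : ℕ) < 2 * n from by rw [hdi]; exact hun),
        if_pos (show (k₀.divNat : ℕ) < 2 * n from by rw [hdk]; omega),
        dif_neg (show ¬ (i : ℕ) < n * (2 * m') from by rw [hbi]; exact hun),
        if_pos (hbj.mpr hvn)]
      simp
    · -- bottom-right blocks
      rw [dif_neg (show ¬ (i.divNat : ℕ) < 2 * n from by rw [hdi]; exact hun),
        if_neg (show ¬ (k₀.divNat : ℕ) < 2 * n from by rw [hdk]; omega),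
        dif_neg (show ¬ (i : ℕ) < n * (2 * m') from by rw [hbi]; exact hun),
        if_neg (show ¬ (j : ℕ) < n * (2 * m') from by rw [hbj]; exact hvn)]
      push_neg at hun hvn
      obtain ⟨e1, e2, he1, he2, hee⟩ : ∃ e1 e2, e1 < 2 ∧ e2 < τ ∧ u - 2 * n = e1 + 2 * e2 :=
        ⟨(u - 2 * n) % 2, (u - 2 * n) / 2, by omega, by omega, by omega⟩
      have hxval : (i : ℕ) - n * (2 * m') = (s + m' * e1) + 2 * m' * e2 := by
        have p1 : m' * u = m' * (2 * n) + m' * e1 + 2 * (m' * e2) := by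
          rw [show u = 2 * n + e1 + 2 * e2 from by omega]; ring
        have p2 : n * (2 * m') = m' * (2 * n) := by ring
        have p3 : 2 * m' * e2 = 2 * (m' * e2) := by ring
        omega
      have hyval : (j : ℕ) - n * (2 * m') = t + 2 * m' * (v - n) := by
        have p1 : 2 * m' * v = 2 * m' * n + 2 * m' * (v - n) := by
          nth_rewrite 1 [show v = n + (v - n) from by omega]
          ring
        have p2 : n * (2 * m') = 2 * m' * n := by ring
        omega
      have hsm : s + m' * e1 < 2 * m' := by
        have h1 : m' * e1 ≤ m' * 1 := Nat.mul_le_mul_left _ (by omega)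
        omega
      rw [one_apply_val, mcast_apply, kron_apply, one_apply_val]
      have hxdm := nat_divmod hsm hxval
      have hydm := nat_divmod ht hyval
      rw [strideMat_apply_val (2 * m') m' 2 (Nat.mul_comm 2 m') _ _ q d hq hd
        (by
          rw [Fin.coe_modNat, Fin.coe_cast]
          exact (hydm.2).trans htdq)]
      rw [ite_one_mul_ite_one, ite_one_mul_ite_one]
      refine if_congr ?_ rfl rfl
      simp only [Fin.coe_divNat, Fin.coe_modNat, Fin.coe_cast, Fin.val_mk]
      have hk2 : (q + m' * d + 2 * m' * v) / m' = d + 2 * v :=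
        (nat_divmod hq (show q + m' * d + 2 * m' * v = q + m' * (d + 2 * v) from by ring)).1
      rw [hidm.1, hxdm.1, hxdm.2, hydm.1, hk2, nat_cancel hs hq]
      omega
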